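/- Let A be an index type, d ≥ 1 a natural number, and a : (A →₀ ℕ) → ℝ a superexponential d-regular admissible positive function. Let f : (A →₀ ℕ) → ℂ with ‖f‖_p < ∞ for some p ∈ ℕ. Then there exists g : (A →₀ ℕ) → ℂ with ‖g‖_r < ∞ for some r ∈ ℕ and f * g = 1 (the indicator of α = 0) if and only if f_0 ≠ 0. -/

import Mathlib

set_option maxHeartbeats 1000000

open scoped ENNReal

/-- The convolution (Cauchy product) of two families indexed by the free commutative
monoid `A →₀ ℕ`, i.e. multiplication in `MvPowerSeries A ℂ`. -/
noncomputable def conv {A : Type*} [DecidableEq A] (f g : (A →₀ ℕ) → ℂ) : (A →₀ ℕ) → ℂ :=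
  fun γ => ∑ x ∈ Finset.HasAntidiagonal.antidiagonal γ, f x.1 * g x.2

/-- The multiplicative unit: the indicator of `α = 0`. -/
noncomputable def convOne {A : Type*} [DecidableEq A] : (A →₀ ℕ) → ℂ :=
  fun γ => if γ = 0 then 1 else 0

/-- The squared weighted `ℓ²`-norm `‖f‖_p² = ∑' α, |f α|² a α ^ (-p)`, as a sum in `[0,∞]`. -/
noncomputable def wsum {A : Type*} (a : (A →₀ ℕ) → ℝ) (p : ℕ) (f : (A →₀ ℕ) → ℂ) : ℝ≥0∞ :=
  ∑' α, ENNReal.ofReal (‖f α‖ ^ 2 / (a α) ^ p)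

namespace VageAux

set_option linter.unusedSectionVars false

variable {A : Type*} [DecidableEq A]

/-! ### ENNReal generalities -/

lemma tsum_antidiag (F : ((A →₀ ℕ) × (A →₀ ℕ)) → ℝ≥0∞) :
    ∑' γ : A →₀ ℕ, ∑ x ∈ Finset.HasAntidiagonal.antidiagonal γ, F x = ∑' x : ((A →₀ ℕ) × (A →₀ ℕ)), F x := by
  have h1 : ∀ γ : A →₀ ℕ, ∑ x ∈ Finset.HasAntidiagonal.antidiagonal γ, F x
      = ∑' x : ((A →₀ ℕ) × (A →₀ ℕ)), if x.1 + x.2 = γ then F x else 0 := by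
    intro γ
    rw [tsum_eq_sum (s := Finset.HasAntidiagonal.antidiagonal γ) (fun x hx => by
      rw [if_neg]; rwa [Finset.HasAntidiagonal.mem_antidiagonal] at hx)]
    exact Finset.sum_congr rfl fun x hx => by
      rw [if_pos (Finset.HasAntidiagonal.mem_antidiagonal.mp hx)]
  simp_rw [h1]
  rw [ENNReal.tsum_comm]
  congr 1
  ext x
  exact tsum_eq_single (x.1 + x.2) (fun γ hγ => if_neg (fun h => hγ h.symm)) |>.trans (if_pos rfl)

lemma tsum_sq_le_sq_tsum (u : (A →₀ ℕ) → ℝ≥0∞) : ∑' α, u α ^ 2 ≤ (∑' α, u α) ^ 2 := by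
  calc ∑' α, u α ^ 2 ≤ ∑' α, u α * (∑' β, u β) :=
        ENNReal.tsum_le_tsum fun α => by
          rw [sq]; exact mul_le_mul_right (ENNReal.le_tsum α) _
    _ = (∑' α, u α) ^ 2 := by rw [ENNReal.tsum_mul_right, sq]

lemma mul_le_sq_add_sq (x y : ℝ≥0∞) : x * y ≤ x ^ 2 + y ^ 2 := by
  rcases le_total x y with h | h
  · calc x * y ≤ y * y := mul_le_mul_left h y
      _ = y ^ 2 := (sq y).symm
      _ ≤ x ^ 2 + y ^ 2 := le_add_self
  · calc x * y ≤ x * x := mul_le_mul_right h x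
      _ = x ^ 2 := (sq x).symm
      _ ≤ x ^ 2 + y ^ 2 := le_self_add

/-! ### Convolution machinery in `ℝ≥0∞` -/

/-- Convolution of `ℝ≥0∞`-valued families. -/
noncomputable def sconv (u v : (A →₀ ℕ) → ℝ≥0∞) : (A →₀ ℕ) → ℝ≥0∞ :=
  fun γ => ∑ x ∈ Finset.HasAntidiagonal.antidiagonal γ, u x.1 * v x.2

/-- The weighted `ℓ¹`-norm. -/
noncomputable def nn (c : (A →₀ ℕ) → ℝ≥0∞) (r : ℕ) (u : (A →₀ ℕ) → ℝ≥0∞) : ℝ≥0∞ :=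
  ∑' α, u α * c α ^ r

lemma nn_mono {c : (A →₀ ℕ) → ℝ≥0∞} {r : ℕ} {u v : (A →₀ ℕ) → ℝ≥0∞}
    (h : ∀ α, u α ≤ v α) : nn c r u ≤ nn c r v :=
  ENNReal.tsum_le_tsum fun α => mul_le_mul_left (h α) _

lemma nn_sconv_le {c : (A →₀ ℕ) → ℝ≥0∞}
    (hcsub : ∀ α β, c (α + β) ≤ c α * c β) (r : ℕ) (u v : (A →₀ ℕ) → ℝ≥0∞) :
    nn c r (sconv u v) ≤ nn c r u * nn c r v := by
  unfold nn sconv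
  calc ∑' γ, (∑ x ∈ Finset.HasAntidiagonal.antidiagonal γ, u x.1 * v x.2) * c γ ^ r
      = ∑' γ, ∑ x ∈ Finset.HasAntidiagonal.antidiagonal γ, u x.1 * v x.2 * c γ ^ r := by
        congr 1; ext γ; rw [Finset.sum_mul]
    _ ≤ ∑' γ, ∑ x ∈ Finset.HasAntidiagonal.antidiagonal γ, (u x.1 * c x.1 ^ r) * (v x.2 * c x.2 ^ r) := by
        apply ENNReal.tsum_le_tsum
        intro γ
        apply Finset.sum_le_sum
        intro x hx
        have hx' := Finset.HasAntidiagonal.mem_antidiagonal.mp hx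
        have : c γ ^ r ≤ c x.1 ^ r * c x.2 ^ r := by
          rw [← mul_pow]
          exact pow_le_pow_left' (hx' ▸ hcsub x.1 x.2) r
        calc u x.1 * v x.2 * c γ ^ r ≤ u x.1 * v x.2 * (c x.1 ^ r * c x.2 ^ r) :=
              mul_le_mul_right this _
          _ = (u x.1 * c x.1 ^ r) * (v x.2 * c x.2 ^ r) := by ring
    _ = ∑' x : ((A →₀ ℕ) × (A →₀ ℕ)), (u x.1 * c x.1 ^ r) * (v x.2 * c x.2 ^ r) :=
        tsum_antidiag _
    _ = (∑' α, u α * c α ^ r) * (∑' β, v β * c β ^ r) := by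
        rw [ENNReal.tsum_prod']
        simp_rw [ENNReal.tsum_mul_left, ENNReal.tsum_mul_right]

/-- Powers of a kernel under `sconv`, starting from the unit. -/
noncomputable def mpow (M : (A →₀ ℕ) → ℝ≥0∞) : ℕ → (A →₀ ℕ) → ℝ≥0∞
  | 0 => fun γ => if γ = 0 then 1 else 0
  | n + 1 => sconv M (mpow M n)

lemma nn_mpow_zero {c : (A →₀ ℕ) → ℝ≥0∞} (hc0 : c 0 = 1) (r : ℕ) (M : (A →₀ ℕ) → ℝ≥0∞) :
    nn c r (mpow M 0) = 1 := by
  unfold nn mpow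
  rw [tsum_eq_single (0 : A →₀ ℕ) (fun γ hγ => by rw [if_neg hγ, zero_mul])]
  rw [if_pos rfl, hc0, one_pow, one_mul]

lemma nn_mpow_le {c : (A →₀ ℕ) → ℝ≥0∞} (hc0 : c 0 = 1)
    (hcsub : ∀ α β, c (α + β) ≤ c α * c β) (r : ℕ) (M : (A →₀ ℕ) → ℝ≥0∞) (n : ℕ) :
    nn c r (mpow M n) ≤ nn c r M ^ n := by
  induction n with
  | zero => rw [pow_zero, nn_mpow_zero hc0]
  | succ n ih =>
    calc nn c r (mpow M (n+1)) = nn c r (sconv M (mpow M n)) := rfl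
      _ ≤ nn c r M * nn c r (mpow M n) := nn_sconv_le hcsub r _ _
      _ ≤ nn c r M * nn c r M ^ n := mul_le_mul_right ih _
      _ = nn c r M ^ (n+1) := by rw [pow_succ, mul_comm]

/-! ### The degree function -/

/-- Total degree of a finitely supported function. -/
def deg (γ : A →₀ ℕ) : ℕ := γ.sum fun _ k => k

lemma deg_add (α β : A →₀ ℕ) : deg (α + β) = deg α + deg β :=
  Finsupp.sum_add_index' (fun _ => rfl) (fun _ _ _ => rfl)

lemma deg_pos {γ : A →₀ ℕ} (h : γ ≠ 0) : 0 < deg γ := by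
  obtain ⟨n, hn⟩ := Finsupp.support_nonempty_iff.mpr h
  have h1 : 0 < γ n := Nat.pos_of_ne_zero (Finsupp.mem_support_iff.mp hn)
  calc 0 < γ n := h1
    _ ≤ deg γ := Finset.single_le_sum (f := fun m => γ m) (fun _ _ => Nat.zero_le _) hn

/-! ### Lemmas about the weight `a` -/

section Weight
variable (d : ℕ) (hd : 1 ≤ d) (a : (A →₀ ℕ) → ℝ) (hpos : ∀ α, 0 < a α) (h0 : a 0 = 1)
  (hgen : ∀ n : A, 1 < a (Finsupp.single n 1))
  (hreg : Summable fun n : A => 1 / ((a (Finsupp.single n 1)) ^ d - 1))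
  (hsup : ∀ α β : A →₀ ℕ, a α * a β ≤ a (α + β))

include hpos h0 hsup in
lemma pow_single_le (n : A) (k : ℕ) : a (Finsupp.single n 1) ^ k ≤ a (Finsupp.single n k) := by
  induction k with
  | zero => simp [Finsupp.single_zero, h0]
  | succ k ih =>
    have : Finsupp.single n (k+1) = Finsupp.single n k + Finsupp.single n 1 := by
      rw [← Finsupp.single_add]
    rw [this, pow_succ]
    calc a (Finsupp.single n 1) ^ k * a (Finsupp.single n 1)
        ≤ a (Finsupp.single n k) * a (Finsupp.single n 1) := by
          apply mul_le_mul_of_nonneg_right ih (hpos _).le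
      _ ≤ _ := hsup _ _

include hpos h0 hgen hsup in
lemma one_le_a (α : A →₀ ℕ) : 1 ≤ a α := by
  induction α using Finsupp.induction with
  | zero => rw [h0]
  | single_add n k β hn hk ih =>
    calc (1:ℝ) = 1 * 1 := by ring
      _ ≤ a (Finsupp.single n k) * a β := by
          apply mul_le_mul (le_trans (one_le_pow₀ (hgen n).le)
            (pow_single_le a hpos h0 hsup n k)) ih zero_le_one (hpos _).le
      _ ≤ _ := hsup _ _

include hpos h0 hgen hsup in
lemma one_lt_a {α : A →₀ ℕ} (hα : α ≠ 0) : 1 < a α := by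
  obtain ⟨n, hn⟩ := Finsupp.support_nonempty_iff.mpr hα
  have hk : 1 ≤ α n := Nat.one_le_iff_ne_zero.mpr (Finsupp.mem_support_iff.mp hn)
  have h1 : (1:ℝ) < a (Finsupp.single n (α n)) := by
    calc (1:ℝ) < a (Finsupp.single n 1) ^ (α n) := one_lt_pow₀ (hgen n) (by omega)
      _ ≤ _ := pow_single_le a hpos h0 hsup n _
  calc (1:ℝ) < a (Finsupp.single n (α n)) * a (α.erase n) := by
        nlinarith [one_le_a a hpos h0 hgen hsup (α.erase n), hpos (Finsupp.single n (α n))]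
    _ ≤ a (Finsupp.single n (α n) + α.erase n) := hsup _ _
    _ = a α := by rw [Finsupp.single_add_erase]

include hd hpos h0 hgen hsup in
lemma sum_Iic_le (γ : A →₀ ℕ) :
    ∑ α ∈ Finset.Iic γ, (a α ^ d)⁻¹ ≤
      ∏ n ∈ γ.support, (1 - (a (Finsupp.single n 1) ^ d)⁻¹)⁻¹ := by
  induction γ using Finsupp.induction with
  | zero =>
    have : Finset.Iic (0 : A →₀ ℕ) = {0} := by
      ext α; simp [Finset.mem_Iic, le_zero_iff]
    simp [this, h0]
  | single_add n k β hn hk ih =>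
    set x : ℝ := (a (Finsupp.single n 1) ^ d)⁻¹ with hx
    have hgd : 1 < a (Finsupp.single n 1) ^ d := one_lt_pow₀ (hgen n) (by omega)
    have hx0 : 0 < x := by rw [hx]; positivity
    have hx1 : x < 1 := by rw [hx, inv_lt_one_iff₀]; right; exact hgd
    have hβn : β n = 0 := Finsupp.notMem_support_iff.mp hn
    have step1 : ∀ α ∈ Finset.Iic (Finsupp.single n k + β),
        (a α ^ d)⁻¹ ≤ (a (Finsupp.single n (α n)) ^ d)⁻¹ * (a (α.erase n) ^ d)⁻¹ := by
      intro α _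
      rw [← mul_inv, ← mul_pow]
      apply inv_anti₀
      · exact pow_pos (mul_pos (hpos _) (hpos _)) d
      · apply pow_le_pow_left₀ (mul_pos (hpos _) (hpos _)).le
        calc a (Finsupp.single n (α n)) * a (α.erase n)
            ≤ a (Finsupp.single n (α n) + α.erase n) := hsup _ _
          _ = a α := by rw [Finsupp.single_add_erase]
    have step2 : ∑ α ∈ Finset.Iic (Finsupp.single n k + β),
        (a (Finsupp.single n (α n)) ^ d)⁻¹ * (a (α.erase n) ^ d)⁻¹
        = ∑ q ∈ Finset.range (k+1) ×ˢ Finset.Iic β,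
            (a (Finsupp.single n q.1) ^ d)⁻¹ * (a (q.2) ^ d)⁻¹ := by
      apply Finset.sum_nbij' (fun α => (α n, α.erase n)) (fun q => Finsupp.single n q.1 + q.2)
      · intro α hα
        rw [Finset.mem_Iic] at hα
        have hαn : α n ≤ k := by
          have := hα n
          simpa [Finsupp.single_eq_same, hβn] using this
        refine Finset.mem_product.mpr ⟨Finset.mem_range.mpr (by omega), Finset.mem_Iic.mpr ?_⟩
        intro m
        rcases eq_or_ne m n with rfl | hm
        · simp
        · have := hα m
          rw [Finsupp.add_apply, Finsupp.single_eq_of_ne hm, zero_add] at this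
          rwa [Finsupp.erase_ne hm]
      · intro q hq
        rw [Finset.mem_product, Finset.mem_range, Finset.mem_Iic] at hq
        rw [Finset.mem_Iic]
        intro m
        rcases eq_or_ne m n with rfl | hm
        · have hq2n : q.2 m ≤ β m := hq.2 m
          rw [Finsupp.add_apply, Finsupp.add_apply, Finsupp.single_eq_same,
            Finsupp.single_eq_same]
          omega
        · have : q.2 m ≤ β m := hq.2 m
          rw [Finsupp.add_apply, Finsupp.add_apply, Finsupp.single_eq_of_ne hm,
            Finsupp.single_eq_of_ne hm]
          omega
      · intro α hα
        exact Finsupp.single_add_erase n α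
      · intro q hq
        rw [Finset.mem_product, Finset.mem_range, Finset.mem_Iic] at hq
        have hq2n : q.2 n = 0 := le_antisymm (hβn ▸ hq.2 n) (Nat.zero_le _)
        obtain ⟨q1, q2⟩ := q
        simp only at hq2n ⊢
        rw [Prod.mk.injEq]
        constructor
        · rw [Finsupp.add_apply, Finsupp.single_eq_same, hq2n, add_zero]
        · rw [Finsupp.erase_add, Finsupp.erase_single, zero_add]
          ext m
          rcases eq_or_ne m n with rfl | hm
          · rw [Finsupp.erase_same, hq2n]
          · rw [Finsupp.erase_ne hm]
      · intro α hα; rfl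
    have step3 : ∑ q ∈ Finset.range (k+1) ×ˢ Finset.Iic β,
        (a (Finsupp.single n q.1) ^ d)⁻¹ * (a (q.2) ^ d)⁻¹
        = (∑ j ∈ Finset.range (k+1), (a (Finsupp.single n j) ^ d)⁻¹) *
          (∑ α ∈ Finset.Iic β, (a α ^ d)⁻¹) := by
      rw [Finset.sum_mul_sum, Finset.sum_product]
    have hgeo : ∑ j ∈ Finset.range (k+1), (a (Finsupp.single n j) ^ d)⁻¹ ≤ (1 - x)⁻¹ := by
      have h1 : ∀ j, (a (Finsupp.single n j) ^ d)⁻¹ ≤ x ^ j := by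
        intro j
        rw [hx, inv_pow]
        apply inv_anti₀ (pow_pos (pow_pos (hpos _) _) _)
        rw [← pow_mul, mul_comm d j, pow_mul]
        exact pow_le_pow_left₀ (pow_nonneg (hpos _).le _) (pow_single_le a hpos h0 hsup n j) d
      calc ∑ j ∈ Finset.range (k+1), (a (Finsupp.single n j) ^ d)⁻¹
          ≤ ∑ j ∈ Finset.range (k+1), x ^ j := Finset.sum_le_sum fun j _ => h1 j
        _ ≤ (1 - x)⁻¹ := by
            have hlt : (0:ℝ) < 1 - x := by linarith
            have hgm := geom_sum_mul x (k+1)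
            rw [inv_eq_one_div, le_div_iff₀ hlt]
            nlinarith [pow_pos hx0 (k+1)]
    have hsupp : (Finsupp.single n k + β).support = insert n β.support := by
      rw [Finsupp.support_add_eq, Finsupp.support_single_ne_zero n hk]
      · rw [← Finset.insert_eq]
      · rw [Finsupp.support_single_ne_zero n hk]
        simp [Finset.disjoint_singleton_left, hn]
    have hIicpos : (0:ℝ) ≤ ∑ α ∈ Finset.Iic β, (a α ^ d)⁻¹ :=
      Finset.sum_nonneg fun α _ => inv_nonneg.mpr (pow_nonneg (hpos α).le d)
    calc ∑ α ∈ Finset.Iic (Finsupp.single n k + β), (a α ^ d)⁻¹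
        ≤ ∑ α ∈ Finset.Iic (Finsupp.single n k + β),
            (a (Finsupp.single n (α n)) ^ d)⁻¹ * (a (α.erase n) ^ d)⁻¹ :=
          Finset.sum_le_sum step1
      _ = (∑ j ∈ Finset.range (k+1), (a (Finsupp.single n j) ^ d)⁻¹) *
          (∑ α ∈ Finset.Iic β, (a α ^ d)⁻¹) := by rw [step2, step3]
      _ ≤ (1 - x)⁻¹ * ∏ m ∈ β.support, (1 - (a (Finsupp.single m 1) ^ d)⁻¹)⁻¹ := by
          apply mul_le_mul hgeo ih hIicpos (inv_nonneg.mpr (by linarith))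
      _ = ∏ m ∈ (Finsupp.single n k + β).support,
            (1 - (a (Finsupp.single m 1) ^ d)⁻¹)⁻¹ := by
          rw [hsupp, Finset.prod_insert hn]

include hd hpos h0 hgen hreg hsup in
lemma sum_le_E (S : Finset (A →₀ ℕ)) :
    ∑ α ∈ S, (a α ^ d)⁻¹ ≤ Real.exp (∑' n : A, 1 / ((a (Finsupp.single n 1)) ^ d - 1)) := by
  set E := Real.exp (∑' n : A, 1 / ((a (Finsupp.single n 1)) ^ d - 1)) with hE
  have hnn : ∀ n : A, 0 ≤ 1 / ((a (Finsupp.single n 1)) ^ d - 1) := by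
    intro n
    have : 1 < a (Finsupp.single n 1) ^ d := one_lt_pow₀ (hgen n) (by omega)
    exact le_of_lt (div_pos one_pos (by linarith))
  set γ : A →₀ ℕ := ∑ α ∈ S, α with hγ
  have hsub : S ⊆ Finset.Iic γ := by
    intro α hα
    rw [Finset.mem_Iic, hγ]
    exact Finset.single_le_sum (f := fun (α : A →₀ ℕ) => α) (fun _ _ => zero_le) hα
  have h1 : ∑ α ∈ S, (a α ^ d)⁻¹ ≤ ∑ α ∈ Finset.Iic γ, (a α ^ d)⁻¹ :=
    Finset.sum_le_sum_of_subset_of_nonneg hsub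
      (fun α _ _ => inv_nonneg.mpr (pow_nonneg (hpos α).le d))
  have h2 : ∀ n ∈ γ.support, (1 - (a (Finsupp.single n 1) ^ d)⁻¹)⁻¹
      ≤ Real.exp (1 / ((a (Finsupp.single n 1)) ^ d - 1)) := by
    intro n _
    set y := a (Finsupp.single n 1) ^ d with hy
    have hy1 : 1 < y := one_lt_pow₀ (hgen n) (by omega)
    have key : (1 - y⁻¹)⁻¹ = 1 / (y - 1) + 1 := by
      have hy0 : y ≠ 0 := by linarith
      have hym : y - 1 ≠ 0 := by linarith
      have h1 : 1 - y⁻¹ = (y - 1) / y := by field_simp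
      rw [h1, inv_div, div_add' _ _ _ hym, div_eq_div_iff hym hym]
      ring
    rw [key]
    exact Real.add_one_le_exp _
  have h3 : ∏ n ∈ γ.support, (1 - (a (Finsupp.single n 1) ^ d)⁻¹)⁻¹ ≤ E := by
    calc ∏ n ∈ γ.support, (1 - (a (Finsupp.single n 1) ^ d)⁻¹)⁻¹
        ≤ ∏ n ∈ γ.support, Real.exp (1 / ((a (Finsupp.single n 1)) ^ d - 1)) := by
          apply Finset.prod_le_prod _ h2
          intro n _
          have h1y : 1 < a (Finsupp.single n 1) ^ d := one_lt_pow₀ (hgen n) (by omega)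
          have : (a (Finsupp.single n 1) ^ d)⁻¹ < 1 := by
            rw [inv_lt_one_iff₀]; right; exact h1y
          exact inv_nonneg.mpr (by linarith)
      _ = Real.exp (∑ n ∈ γ.support, 1 / ((a (Finsupp.single n 1)) ^ d - 1)) :=
          (Real.exp_sum _ _).symm
      _ ≤ E := by
          rw [hE]
          apply Real.exp_le_exp.mpr
          exact Summable.sum_le_tsum _ (fun n _ => hnn n) hreg
  exact h1.trans ((sum_Iic_le d hd a hpos h0 hgen hsup γ).trans h3)

include hd hpos h0 hgen hreg hsup in
lemma tsum_c_le :
    ∑' α : A →₀ ℕ, ((ENNReal.ofReal (a α))⁻¹) ^ d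
      ≤ ENNReal.ofReal (Real.exp (∑' n : A, 1 / ((a (Finsupp.single n 1)) ^ d - 1))) := by
  rw [ENNReal.tsum_eq_iSup_sum]
  apply iSup_le
  intro S
  have heq : ∀ α : A →₀ ℕ, ((ENNReal.ofReal (a α))⁻¹) ^ d = ENNReal.ofReal ((a α ^ d)⁻¹) := by
    intro α
    rw [ENNReal.ofReal_inv_of_pos (pow_pos (hpos α) d), ENNReal.ofReal_pow (hpos α).le,
      ENNReal.inv_pow]
  calc ∑ α ∈ S, ((ENNReal.ofReal (a α))⁻¹) ^ d
      = ENNReal.ofReal (∑ α ∈ S, (a α ^ d)⁻¹) := by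
        rw [ENNReal.ofReal_sum_of_nonneg (fun α _ => inv_nonneg.mpr (pow_nonneg (hpos α).le d))]
        exact Finset.sum_congr rfl fun α _ => heq α
    _ ≤ _ := ENNReal.ofReal_le_ofReal (sum_le_E d hd a hpos h0 hgen hreg hsup S)

end Weight

end VageAux

open VageAux in
/-- In a Våge space, `f` is invertible (has a convolution inverse in the space) if and
only if its generalized expectation `f 0` is nonzero. -/
theorem invertible_iff_expectation_ne_zero {A : Type*} [DecidableEq A]
    (d : ℕ) (hd : 1 ≤ d) (a : (A →₀ ℕ) → ℝ)
    (hpos : ∀ α, 0 < a α)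
    (h0 : a 0 = 1)
    (hgen : ∀ n : A, 1 < a (Finsupp.single n 1))
    (hreg : Summable fun n : A => 1 / ((a (Finsupp.single n 1)) ^ d - 1))
    (hsup : ∀ α β : A →₀ ℕ, a α * a β ≤ a (α + β))
    (f : (A →₀ ℕ) → ℂ) (p : ℕ) (hf : wsum a p f < ⊤) :
    (∃ (g : (A →₀ ℕ) → ℂ) (r : ℕ), wsum a r g < ⊤ ∧ conv f g = convOne) ↔ f 0 ≠ 0 := by
  constructor
  · rintro ⟨g, r, hg, hconv⟩
    intro hf0
    have h1 : conv f g 0 = convOne 0 := congrFun hconv 0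
    rw [convOne, if_pos rfl] at h1
    rw [conv, Finset.HasAntidiagonal.antidiagonal_zero, Finset.sum_singleton, hf0, zero_mul] at h1
    exact zero_ne_one h1
  · intro hf0
    -- the weight function in ℝ≥0∞
    obtain ⟨c, hc⟩ : ∃ c : (A →₀ ℕ) → ℝ≥0∞, ∀ α, c α = (ENNReal.ofReal (a α))⁻¹ :=
      ⟨_, fun _ => rfl⟩
    have hcle : ∀ α, c α ≤ 1 := by
      intro α
      rw [hc α, ENNReal.inv_le_one]
      exact ENNReal.one_le_ofReal.mpr (one_le_a a hpos h0 hgen hsup α)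
    have hc0 : c 0 = 1 := by
      rw [hc 0, h0, ENNReal.ofReal_one, inv_one]
    have hclt : ∀ α : A →₀ ℕ, α ≠ 0 → c α < 1 := by
      intro α hα
      rw [hc α, ENNReal.inv_lt_one]
      exact ENNReal.one_lt_ofReal.mpr (one_lt_a a hpos h0 hgen hsup hα)
    have hcsub : ∀ α β : A →₀ ℕ, c (α + β) ≤ c α * c β := by
      intro α β
      rw [hc α, hc β, hc (α + β)]
      rw [← ENNReal.mul_inv (Or.inl (by
            simp only [ne_eq, ENNReal.ofReal_eq_zero, not_le]; exact hpos α))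
          (Or.inl ENNReal.ofReal_ne_top)]
      apply ENNReal.inv_le_inv'
      rw [← ENNReal.ofReal_mul (hpos α).le]
      exact ENNReal.ofReal_le_ofReal (hsup α β)
    -- wsum in terms of c
    have wsum_eq : ∀ (r : ℕ) (h : (A →₀ ℕ) → ℂ),
        wsum a r h = ∑' α, (‖h α‖₊ : ℝ≥0∞) ^ 2 * c α ^ r := by
      intro r h
      unfold wsum
      congr 1; ext α
      rw [div_eq_mul_inv, ENNReal.ofReal_mul (by positivity),
        ENNReal.ofReal_inv_of_pos (pow_pos (hpos α) r), ENNReal.ofReal_pow (hpos α).le,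
        ENNReal.ofReal_pow (norm_nonneg _), ofReal_norm, enorm_eq_nnnorm, hc α, ENNReal.inv_pow]
    -- the finite constant T
    have hTfin : (∑' α : A →₀ ℕ, c α ^ d) < ⊤ := by
      have h1 : (∑' α : A →₀ ℕ, c α ^ d) = ∑' α : A →₀ ℕ, ((ENNReal.ofReal (a α))⁻¹) ^ d := by
        congr 1; ext α; rw [hc α]
      rw [h1]
      exact lt_of_le_of_lt (tsum_c_le d hd a hpos h0 hgen hreg hsup) ENNReal.ofReal_lt_top
    -- the inverse power series
    obtain ⟨g, hgdef⟩ : ∃ g : (A →₀ ℕ) → ℂ,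
        g = ((f : MvPowerSeries A ℂ)⁻¹ : MvPowerSeries A ℂ) := ⟨_, rfl⟩
    have hcc : MvPowerSeries.constantCoeff (f : MvPowerSeries A ℂ) ≠ 0 := hf0
    have hmi := MvPowerSeries.mul_inv_cancel (σ := A) (k := ℂ) f hcc
    have hconv : conv f g = convOne := by
      funext γ
      have h2 := congrArg (fun φ : MvPowerSeries A ℂ => MvPowerSeries.coeff γ φ) hmi
      simp only [MvPowerSeries.coeff_mul, MvPowerSeries.coeff_one] at h2
      show conv f g γ = convOne γ
      rw [hgdef]
      erw [MvPowerSeries.coeff_mul] at h2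
      exact h2
    have hg0 : g 0 = (f 0)⁻¹ := by
      have h1 : conv f g 0 = 1 := by rw [hconv]; simp [convOne]
      rw [conv, Finset.HasAntidiagonal.antidiagonal_zero, Finset.sum_singleton] at h1
      exact (inv_eq_of_mul_eq_one_right h1).symm
    -- the kernel M and its powers
    obtain ⟨K, hK⟩ : ∃ K : ℝ≥0∞, K = (‖f 0‖₊ : ℝ≥0∞)⁻¹ := ⟨_, rfl⟩
    have hKne : (‖f 0‖₊ : ℝ≥0∞) ≠ 0 := by
      simp [nnnorm_eq_zero, hf0]
    have hKfin : K < ⊤ := by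
      rw [hK]
      exact ENNReal.inv_lt_top.mpr (pos_iff_ne_zero.mpr hKne)
    obtain ⟨M, hM⟩ : ∃ M : (A →₀ ℕ) → ℝ≥0∞,
        ∀ α, M α = if α = 0 then 0 else K * (‖f α‖₊ : ℝ≥0∞) := ⟨_, fun _ => rfl⟩
    have hM0 : M 0 = 0 := by rw [hM 0, if_pos rfl]
    obtain ⟨S, hS⟩ : ∃ S : (A →₀ ℕ) → ℝ≥0∞, ∀ γ, S γ = ∑' n, VageAux.mpow M n γ :=
      ⟨_, fun _ => rfl⟩
    -- the recursion inequality
    have hrec : ∀ γ : A →₀ ℕ, γ ≠ 0 →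
        (‖g γ‖₊ : ℝ≥0∞) ≤ ∑ x ∈ Finset.HasAntidiagonal.antidiagonal γ, M x.1 * (‖g x.2‖₊ : ℝ≥0∞) := by
      intro γ hγ
      have h1 : conv f g γ = 0 := by rw [hconv]; simp [convOne, hγ]
      have hmem : ((0 : A →₀ ℕ), γ) ∈ Finset.HasAntidiagonal.antidiagonal γ := by
        rw [Finset.HasAntidiagonal.mem_antidiagonal, zero_add]
      rw [conv, ← Finset.add_sum_erase _ _ hmem] at h1
      have h2 : f 0 * g γ = -∑ x ∈ (Finset.HasAntidiagonal.antidiagonal γ).erase (0, γ), f x.1 * g x.2 := by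
        linear_combination h1
      have h3 : (‖f 0 * g γ‖₊ : ℝ≥0∞)
          ≤ ∑ x ∈ (Finset.HasAntidiagonal.antidiagonal γ).erase (0, γ),
              (‖f x.1‖₊ : ℝ≥0∞) * (‖g x.2‖₊ : ℝ≥0∞) := by
        rw [h2, nnnorm_neg]
        have h3' : ‖∑ x ∈ (Finset.HasAntidiagonal.antidiagonal γ).erase (0, γ), f x.1 * g x.2‖₊
            ≤ ∑ x ∈ (Finset.HasAntidiagonal.antidiagonal γ).erase (0, γ), ‖f x.1‖₊ * ‖g x.2‖₊ :=
          (nnnorm_sum_le _ _).trans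
            (le_of_eq (Finset.sum_congr rfl fun x _ => nnnorm_mul _ _))
        refine le_trans (ENNReal.coe_le_coe.mpr h3') (le_of_eq ?_)
        rw [ENNReal.coe_finset_sum]
        exact Finset.sum_congr rfl fun x _ => by rw [ENNReal.coe_mul]
      have h4 : (‖g γ‖₊ : ℝ≥0∞) = K * (‖f 0 * g γ‖₊ : ℝ≥0∞) := by
        rw [nnnorm_mul, ENNReal.coe_mul, hK, ← mul_assoc,
          ENNReal.inv_mul_cancel hKne ENNReal.coe_ne_top, one_mul]
      calc (‖g γ‖₊ : ℝ≥0∞) = K * (‖f 0 * g γ‖₊ : ℝ≥0∞) := h4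
        _ ≤ K * ∑ x ∈ (Finset.HasAntidiagonal.antidiagonal γ).erase (0, γ),
              (‖f x.1‖₊ : ℝ≥0∞) * (‖g x.2‖₊ : ℝ≥0∞) := mul_le_mul_right h3 K
        _ = ∑ x ∈ (Finset.HasAntidiagonal.antidiagonal γ).erase (0, γ),
              (K * (‖f x.1‖₊ : ℝ≥0∞)) * (‖g x.2‖₊ : ℝ≥0∞) := by
            rw [Finset.mul_sum]
            exact Finset.sum_congr rfl fun x _ => by ring
        _ ≤ ∑ x ∈ (Finset.HasAntidiagonal.antidiagonal γ).erase (0, γ), M x.1 * (‖g x.2‖₊ : ℝ≥0∞) := by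
            apply Finset.sum_le_sum
            intro x hx
            have hx1 : x.1 ≠ 0 := by
              intro h
              apply Finset.ne_of_mem_erase hx
              have hx' := Finset.HasAntidiagonal.mem_antidiagonal.mp (Finset.mem_of_mem_erase hx)
              rw [h, zero_add] at hx'
              rw [Prod.ext_iff]
              exact ⟨h, hx'⟩
            rw [hM x.1, if_neg hx1]
        _ ≤ ∑ x ∈ Finset.HasAntidiagonal.antidiagonal γ, M x.1 * (‖g x.2‖₊ : ℝ≥0∞) :=
            Finset.sum_le_sum_of_subset (Finset.erase_subset _ _)
    -- S is "stable": sconv M S ≤ S pointwise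
    have hSstep : ∀ γ, VageAux.sconv M S γ = ∑' n, VageAux.mpow M (n+1) γ := by
      intro γ
      rw [VageAux.sconv]
      calc ∑ x ∈ Finset.HasAntidiagonal.antidiagonal γ, M x.1 * S x.2
          = ∑ x ∈ Finset.HasAntidiagonal.antidiagonal γ, ∑' n, M x.1 * VageAux.mpow M n x.2 := by
            refine Finset.sum_congr rfl fun x _ => ?_
            rw [hS x.2, ENNReal.tsum_mul_left]
        _ = ∑' n, ∑ x ∈ Finset.HasAntidiagonal.antidiagonal γ, M x.1 * VageAux.mpow M n x.2 :=
            (Summable.tsum_finsetSum (fun _ _ => ENNReal.summable)).symm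
        _ = ∑' n, VageAux.mpow M (n+1) γ := by
            refine tsum_congr fun n => ?_
            rw [show VageAux.mpow M (n+1) = VageAux.sconv M (VageAux.mpow M n) from rfl,
              VageAux.sconv]
    have hSle : ∀ γ, VageAux.sconv M S γ ≤ S γ := by
      intro γ
      rw [hSstep γ, hS γ]
      exact Summable.tsum_le_tsum_of_inj Nat.succ Nat.succ_injective (fun c _ => zero_le)
        (fun n => le_rfl) ENNReal.summable ENNReal.summable
    -- the pointwise bound on g
    have hbase : (‖g 0‖₊ : ℝ≥0∞) ≤ K * S 0 := by
      have h1 : (‖g 0‖₊ : ℝ≥0∞) = K := by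
        rw [hg0, nnnorm_inv, ENNReal.coe_inv (by simpa using hf0), hK]
      have h2 : (1 : ℝ≥0∞) ≤ S 0 := by
        rw [hS 0]
        calc (1:ℝ≥0∞) = VageAux.mpow M 0 0 := by simp [VageAux.mpow]
          _ ≤ ∑' n, VageAux.mpow M n 0 := ENNReal.le_tsum 0
      calc (‖g 0‖₊ : ℝ≥0∞) = K * 1 := by rw [h1, mul_one]
        _ ≤ K * S 0 := mul_le_mul_right h2 K
    have hbound : ∀ γ : A →₀ ℕ, (‖g γ‖₊ : ℝ≥0∞) ≤ K * S γ := by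
      have key : ∀ N : ℕ, ∀ γ : A →₀ ℕ, VageAux.deg γ ≤ N → (‖g γ‖₊ : ℝ≥0∞) ≤ K * S γ := by
        intro N
        induction N with
        | zero =>
          intro γ hγ
          have : γ = 0 := by
            by_contra h
            exact absurd hγ (not_le.mpr (deg_pos h))
          rw [this]; exact hbase
        | succ N ih =>
          intro γ hγ
          by_cases h : γ = 0
          · rw [h]; exact hbase
          · calc (‖g γ‖₊ : ℝ≥0∞) ≤ ∑ x ∈ Finset.HasAntidiagonal.antidiagonal γ, M x.1 * (‖g x.2‖₊ : ℝ≥0∞) :=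
                  hrec γ h
              _ ≤ ∑ x ∈ Finset.HasAntidiagonal.antidiagonal γ, M x.1 * (K * S x.2) := by
                  apply Finset.sum_le_sum
                  intro x hx
                  by_cases hx1 : x.1 = 0
                  · rw [hM x.1, if_pos hx1, zero_mul, zero_mul]
                  · apply mul_le_mul_right
                    apply ih
                    have hx' := Finset.HasAntidiagonal.mem_antidiagonal.mp hx
                    have hdd : VageAux.deg γ = VageAux.deg x.1 + VageAux.deg x.2 := by
                      rw [← hx', deg_add]
                    have h1 : 0 < VageAux.deg x.1 := deg_pos hx1
                    omega
              _ = K * VageAux.sconv M S γ := by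
                  rw [VageAux.sconv, Finset.mul_sum]
                  exact Finset.sum_congr rfl fun x _ => by ring
              _ ≤ K * S γ := mul_le_mul_right (hSle γ) K
      intro γ
      exact key (VageAux.deg γ) γ le_rfl
    -- finiteness of nn at level p + d
    have hMle : ∀ α, M α ≤ K * (‖f α‖₊ : ℝ≥0∞) := by
      intro α
      rw [hM α]
      by_cases h : α = 0
      · rw [if_pos h]; exact zero_le
      · rw [if_neg h]
    have hnnf : VageAux.nn c (p + d) (fun α => (‖f α‖₊ : ℝ≥0∞)) ≤ wsum a p f
        + ∑' α : A →₀ ℕ, c α ^ d := by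
      rw [wsum_eq p f, VageAux.nn, ← ENNReal.tsum_add]
      apply ENNReal.tsum_le_tsum
      intro α
      have h1 : (‖f α‖₊ : ℝ≥0∞) * c α ^ (p + d)
          = ((‖f α‖₊ : ℝ≥0∞) * c α ^ p) * c α ^ d := by rw [pow_add]; ring
      rw [h1]
      calc ((‖f α‖₊ : ℝ≥0∞) * c α ^ p) * c α ^ d
          ≤ ((‖f α‖₊ : ℝ≥0∞) * c α ^ p) ^ 2 + (c α ^ d) ^ 2 := mul_le_sq_add_sq _ _
        _ = (‖f α‖₊ : ℝ≥0∞) ^ 2 * (c α ^ p) ^ 2 + (c α ^ d) ^ 2 := by rw [mul_pow]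
        _ ≤ (‖f α‖₊ : ℝ≥0∞) ^ 2 * c α ^ p + c α ^ d := by
            apply add_le_add
            · apply mul_le_mul_right
              rw [← pow_mul]
              exact pow_le_pow_right_of_le_one' (hcle α) (by omega)
            · rw [← pow_mul]
              exact pow_le_pow_right_of_le_one' (hcle α) (by omega)
    have hnnM0 : VageAux.nn c (p + d) M < ⊤ := by
      calc VageAux.nn c (p + d) M
          ≤ VageAux.nn c (p + d) (fun α => K * (‖f α‖₊ : ℝ≥0∞)) := nn_mono hMle
        _ = K * VageAux.nn c (p + d) (fun α => (‖f α‖₊ : ℝ≥0∞)) := by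
            rw [VageAux.nn, VageAux.nn, ← ENNReal.tsum_mul_left]
            exact tsum_congr fun α => by ring
        _ ≤ K * (wsum a p f + ∑' α : A →₀ ℕ, c α ^ d) := mul_le_mul_right hnnf K
        _ < ⊤ := ENNReal.mul_lt_top hKfin (ENNReal.add_lt_top.mpr ⟨hf, hTfin⟩)
    -- choose r with nn c r M < 1
    have hsmall : ∃ r : ℕ, VageAux.nn c r M < 1 := by
      by_cases htriv : VageAux.nn c (p + d) M < 1
      · exact ⟨p + d, htriv⟩
      push_neg at htriv
      obtain ⟨t, ht⟩ : ∃ t : ℝ≥0∞, t = VageAux.nn c (p + d) M := ⟨_, rfl⟩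
      rw [← ht] at htriv hnnM0
      have ht0 : t ≠ 0 := by
        intro h; rw [h] at htriv; exact absurd htriv (by norm_num)
      have htne : t ≠ ⊤ := hnnM0.ne
      -- find a finite set catching most of the mass
      have hlt : t - 1/2 < ⨆ s : Finset (A →₀ ℕ), ∑ α ∈ s, M α * c α ^ (p + d) := by
        calc t - 1/2 < t := ENNReal.sub_lt_self htne ht0 (by norm_num)
          _ = _ := by rw [ht, VageAux.nn, ENNReal.tsum_eq_iSup_sum]
      obtain ⟨F, hF⟩ := lt_iSup_iff.mp hlt
      have hsplit : ∀ r : ℕ, VageAux.nn c r M = (∑ α ∈ F, M α * c α ^ r)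
          + ∑' α : ((↑F : Set (A →₀ ℕ))ᶜ : Set (A →₀ ℕ)), M α * c α ^ r := by
        intro r
        rw [VageAux.nn, ← Finset.tsum_subtype]
        exact (Summable.tsum_add_tsum_compl ENNReal.summable ENNReal.summable).symm
      have htail : (∑' α : ((↑F : Set (A →₀ ℕ))ᶜ : Set (A →₀ ℕ)), M α * c α ^ (p + d))
          < 1/2 := by
        by_contra hcon
        push_neg at hcon
        have h1 : t = (∑ α ∈ F, M α * c α ^ (p + d))
            + ∑' α : ((↑F : Set (A →₀ ℕ))ᶜ : Set (A →₀ ℕ)), M α * c α ^ (p + d) := by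
          rw [ht]; exact hsplit (p + d)
        have h2 : t < (∑ α ∈ F, M α * c α ^ (p + d)) + 1/2 := by
          calc t = (t - 1/2) + 1/2 := by
                rw [tsub_add_cancel_of_le]
                calc (1/2 : ℝ≥0∞) ≤ 1 := by norm_num
                  _ ≤ t := htriv
            _ < (∑ α ∈ F, M α * c α ^ (p + d)) + 1/2 :=
                ENNReal.add_lt_add_right (by norm_num) hF
        have h3 : (∑ α ∈ F, M α * c α ^ (p + d)) + 1/2
            ≤ (∑ α ∈ F, M α * c α ^ (p + d))
              + ∑' α : ((↑F : Set (A →₀ ℕ))ᶜ : Set (A →₀ ℕ)), M α * c α ^ (p + d) :=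
          add_le_add_right hcon _
        rw [← h1] at h3
        exact absurd (h2.trans_le h3) (lt_irrefl t)
      -- the sup of c on the relevant finite set
      obtain ⟨m, hm⟩ : ∃ m : ℝ≥0∞, m = (F.filter (fun α => M α ≠ 0)).sup c := ⟨_, rfl⟩
      have hm1 : m < 1 := by
        rw [hm]
        apply Finset.sup_lt_iff (by norm_num : (⊥ : ℝ≥0∞) < 1) |>.mpr
        intro α hα
        rw [Finset.mem_filter] at hα
        have : α ≠ 0 := by
          intro h
          apply hα.2
          rw [h, hM0]
        exact hclt α this
      have hfin : ∀ k : ℕ, (∑ α ∈ F, M α * c α ^ ((p + d) + k)) ≤ m ^ k * t := by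
        intro k
        calc ∑ α ∈ F, M α * c α ^ ((p + d) + k)
            ≤ ∑ α ∈ F, m ^ k * (M α * c α ^ (p + d)) := by
              apply Finset.sum_le_sum
              intro α hα
              by_cases h : M α = 0
              · rw [h, zero_mul, zero_mul, mul_zero]
              · rw [pow_add]
                have hcm : c α ≤ m := by
                  rw [hm]
                  exact Finset.le_sup (Finset.mem_filter.mpr ⟨hα, h⟩)
                calc M α * (c α ^ (p + d) * c α ^ k)
                    ≤ M α * (c α ^ (p + d) * m ^ k) :=
                      mul_le_mul_right (mul_le_mul_right (pow_le_pow_left' hcm k) _) _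
                  _ = m ^ k * (M α * c α ^ (p + d)) := by ring
          _ = m ^ k * ∑ α ∈ F, M α * c α ^ (p + d) := by rw [Finset.mul_sum]
          _ ≤ m ^ k * t := by
              apply mul_le_mul_right
              rw [ht, VageAux.nn]
              exact ENNReal.sum_le_tsum F
      -- choose k with m ^ k * t < 1/2
      have htend : Filter.Tendsto (fun k : ℕ => m ^ k * t) Filter.atTop (nhds 0) := by
        have h1 := ENNReal.tendsto_pow_atTop_nhds_zero_of_lt_one hm1
        have h2 := ENNReal.Tendsto.mul_const h1 (Or.inr htne)
        simpa using h2
      have hev : ∀ᶠ k in Filter.atTop, m ^ k * t < 1/2 :=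
        htend.eventually (gt_mem_nhds (by norm_num : (0:ℝ≥0∞) < 1/2))
      obtain ⟨k, hk⟩ := hev.exists
      refine ⟨(p + d) + k, ?_⟩
      rw [hsplit ((p + d) + k)]
      have htail' : (∑' α : ((↑F : Set (A →₀ ℕ))ᶜ : Set (A →₀ ℕ)), M α * c α ^ ((p + d) + k))
          < 1/2 := by
        refine lt_of_le_of_lt ?_ htail
        apply ENNReal.tsum_le_tsum
        intro α
        exact mul_le_mul_right (pow_le_pow_right_of_le_one' (hcle _) (by omega)) _
      calc (∑ α ∈ F, M α * c α ^ ((p + d) + k))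
            + ∑' α : ((↑F : Set (A →₀ ℕ))ᶜ : Set (A →₀ ℕ)), M α * c α ^ ((p + d) + k)
          ≤ m ^ k * t
            + ∑' α : ((↑F : Set (A →₀ ℕ))ᶜ : Set (A →₀ ℕ)), M α * c α ^ ((p + d) + k) :=
            add_le_add_left (hfin k) _
        _ < 1/2 + 1/2 := ENNReal.add_lt_add hk htail'
        _ = 1 := ENNReal.add_halves 1
    obtain ⟨r, hr⟩ := hsmall
    -- nn of S is finite
    have hnnS : VageAux.nn c r S < ⊤ := by
      have h1 : VageAux.nn c r S = ∑' n, VageAux.nn c r (VageAux.mpow M n) := by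
        rw [VageAux.nn]
        calc ∑' α, S α * c α ^ r
            = ∑' α, ∑' n, VageAux.mpow M n α * c α ^ r := by
              refine tsum_congr fun α => ?_
              rw [hS α, ENNReal.tsum_mul_right]
          _ = ∑' n, ∑' α, VageAux.mpow M n α * c α ^ r := ENNReal.tsum_comm
          _ = ∑' n, VageAux.nn c r (VageAux.mpow M n) := rfl
      rw [h1]
      calc ∑' n, VageAux.nn c r (VageAux.mpow M n) ≤ ∑' n, VageAux.nn c r M ^ n :=
            ENNReal.tsum_le_tsum (nn_mpow_le hc0 hcsub r M)
        _ = (1 - VageAux.nn c r M)⁻¹ := ENNReal.tsum_geometric _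
        _ < ⊤ := by
            rw [ENNReal.inv_lt_top]
            exact tsub_pos_of_lt hr
    -- conclude
    refine ⟨g, 2 * r, ?_, hconv⟩
    rw [wsum_eq]
    calc ∑' α, (‖g α‖₊ : ℝ≥0∞) ^ 2 * c α ^ (2 * r)
        = ∑' α, ((‖g α‖₊ : ℝ≥0∞) * c α ^ r) ^ 2 := by
          refine tsum_congr fun α => ?_
          rw [mul_pow, ← pow_mul, mul_comm r 2]
      _ ≤ ∑' α, ((K * S α) * c α ^ r) ^ 2 := by
          apply ENNReal.tsum_le_tsum
          intro α
          exact pow_le_pow_left' (mul_le_mul_left (hbound α) _) 2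
      _ ≤ (∑' α, (K * S α) * c α ^ r) ^ 2 := tsum_sq_le_sq_tsum _
      _ = (K * VageAux.nn c r S) ^ 2 := by
          rw [VageAux.nn, ← ENNReal.tsum_mul_left]
          exact congrArg (· ^ 2) (tsum_congr fun α => by ring)
      _ < ⊤ := by
          apply ENNReal.pow_lt_top
          exact ENNReal.mul_lt_top hKfin hnnS
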